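/- Define f̃ = min{ #J : J ⊆ {1,...,s}, J ∩ I_σ ≠ ∅ for all σ ∈ Σ_max }. Then f̃ = min{ ∑_{i=1}^s e_i : (e_1,...,e_s) ≠ 0, μ(p^{e_1},...,p^{e_s}) ≠ 0 } for any prime ideal p. -/

import Mathlib

open scoped Classical

/-- with `μ` the Möbius-type function on `s`-tuples of nonzero
ideals of `𝓞 K` associated to the family `{I_σ}_{σ ∈ Smax}` of subsets of
`{1,…,s}`, the quantity `f̃ = min{#J : J ∩ I_σ ≠ ∅ ∀σ}` equals
`min{∑ e_i : e ≠ 0, μ(p^{e_1},…,p^{e_s}) ≠ 0}` for any nonzero prime ideal `p`. -/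
theorem stmt_14 (K : Type*) [Field K] [NumberField K] (s : ℕ)
    (Smax : Finset (Finset (Fin s))) (hS : Smax.Nonempty)
    (hSne : ∀ σ ∈ Smax, σ.Nonempty)
    (μ : (Fin s → Ideal (NumberField.RingOfIntegers K)) → ℤ)
    (hmul : ∀ a b : Fin s → Ideal (NumberField.RingOfIntegers K),
      (∏ i, a i) ⊔ (∏ i, b i) = ⊤ → μ (fun i => a i * b i) = μ a * μ b)
    (hinv : ∀ b : Fin s → Ideal (NumberField.RingOfIntegers K),
      (∀ i, b i ≠ ⊥) →
      (if Smax.sup (fun σ => ∏ i ∈ σ, b i) = ⊤ then (1 : ℤ) else 0) =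
        ∑ᶠ d : Fin s → Ideal (NumberField.RingOfIntegers K),
          Set.indicator {d | ∀ i, b i ≤ d i} μ d)
    (p : Ideal (NumberField.RingOfIntegers K)) (hp : p.IsPrime) (hp0 : p ≠ ⊥) :
    sInf {N : ℕ | ∃ J : Finset (Fin s),
        (∀ σ ∈ Smax, (J ∩ σ).Nonempty) ∧ J.card = N} =
      sInf {N : ℕ | ∃ e : Fin s → ℕ, e ≠ 0 ∧
        μ (fun i => p ^ e i) ≠ 0 ∧ N = ∑ i, e i} := by
  classical
  set R := NumberField.RingOfIntegers K
  have hpP : Prime p := Ideal.prime_of_isPrime hp0 hp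
  have hpne : (p : Ideal R) ≠ 0 := by simpa [Ideal.zero_eq_bot] using hp0
  have powinj : Function.Injective (fun n : ℕ => p ^ n) :=
    pow_injective_of_not_isUnit hpP.not_unit hpne
  set P : (Fin s → ℕ) → (Fin s → Ideal R) := fun c i => p ^ c i with hPdef
  have Pinj : Function.Injective P := fun a b h => funext fun i => powinj (congrFun h i)
  set T : (Fin s → ℕ) → Finset (Fin s → ℕ) :=
    fun e => Fintype.piFinset (fun i => Finset.range (e i + 1)) with hTdef
  have memT : ∀ e c : Fin s → ℕ, c ∈ T e ↔ ∀ i, c i ≤ e i := by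
    intro e c
    simp [hTdef, Fintype.mem_piFinset, Nat.lt_succ_iff]
  -- the key recursion coming from `hinv`
  have key : ∀ e : Fin s → ℕ,
      (if (∃ σ ∈ Smax, ∀ i ∈ σ, e i = 0) then (1 : ℤ) else 0) = ∑ c ∈ T e, μ (P c) := by
    intro e
    have hb : ∀ i, (P e) i ≠ ⊥ := by
      intro i
      simpa [hPdef, Ideal.zero_eq_bot] using pow_ne_zero (e i) hpne
    have h1 := hinv (P e) hb
    have hcond : (Smax.sup (fun σ => ∏ i ∈ σ, (P e) i) = ⊤) ↔
        (∃ σ ∈ Smax, ∀ i ∈ σ, e i = 0) := by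
      constructor
      · intro h
        by_contra hc
        push_neg at hc
        have hle : Smax.sup (fun σ => ∏ i ∈ σ, (P e) i) ≤ p := by
          apply Finset.sup_le
          intro σ hσ
          obtain ⟨i, hiσ, hi⟩ := hc σ hσ
          have h1' : ∏ j ∈ σ, (P e) j ≤ (P e) i :=
            le_trans Ideal.prod_le_inf (Finset.inf_le hiσ)
          have h2' : (P e) i ≤ p := by
            have := Ideal.pow_le_pow_right (I := p) (Nat.one_le_iff_ne_zero.mpr hi)
            simpa [hPdef] using this
          exact le_trans h1' h2'
        rw [h] at hle
        exact hp.ne_top (top_le_iff.mp hle)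
      · rintro ⟨σ, hσ, hzero⟩
        have hterm : ∏ i ∈ σ, (P e) i = ⊤ := by
          rw [← Ideal.one_eq_top]
          exact Finset.prod_eq_one fun i hi => by simp [hPdef, hzero i hi]
        exact top_le_iff.mp (hterm ▸ Finset.le_sup (f := fun σ => ∏ i ∈ σ, (P e) i) hσ)
    have hset : {d : Fin s → Ideal R | ∀ i, (P e) i ≤ d i} = ↑((T e).image P) := by
      ext d
      simp only [Set.mem_setOf_eq, Finset.coe_image, Set.mem_image, Finset.mem_coe]
      constructor
      · intro hd
        have hex : ∀ i, ∃ c ≤ e i, d i = p ^ c := by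
          intro i
          have hdvd : d i ∣ p ^ e i := Ideal.dvd_iff_le.mpr (hd i)
          obtain ⟨c, hc, hassoc⟩ := (dvd_prime_pow hpP (e i)).mp hdvd
          exact ⟨c, hc, associated_iff_eq.mp hassoc⟩
        choose c hc1 hc2 using hex
        exact ⟨c, (memT e c).mpr hc1, funext fun i => (hc2 i).symm⟩
      · rintro ⟨c, hcT, rfl⟩
        intro i
        exact Ideal.pow_le_pow_right ((memT e c).mp hcT i)
    simp only [hcond] at h1
    calc (if (∃ σ ∈ Smax, ∀ i ∈ σ, e i = 0) then (1 : ℤ) else 0)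
        = ∑ᶠ d, Set.indicator {d : Fin s → Ideal R | ∀ i, (P e) i ≤ d i} μ d := h1
      _ = ∑ᶠ d ∈ {d : Fin s → Ideal R | ∀ i, (P e) i ≤ d i}, μ d := (finsum_mem_def _ μ).symm
      _ = ∑ d ∈ (T e).image P, μ d := by rw [hset]; exact finsum_mem_coe_finset _ _
      _ = ∑ c ∈ T e, μ (P c) := Finset.sum_image (fun a _ b _ h => Pinj h)
  have m0 : μ (P 0) = 1 := by
    have hkey := key 0
    have hT0 : T 0 = {0} := by
      ext c
      simp only [memT, Finset.mem_singleton]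
      constructor
      · intro h; funext i; exact Nat.le_zero.mp (h i)
      · intro h; subst h; intro i; exact le_refl _
    obtain ⟨σ, hσ⟩ := hS
    rw [hT0, Finset.sum_singleton, if_pos ⟨σ, hσ, fun i _ => rfl⟩] at hkey
    exact hkey.symm
  -- (B): vanishing of μ at nonzero tuples whose support misses some σ
  have hzero : ∀ n (e : Fin s → ℕ), ∑ i, e i = n → e ≠ 0 →
      (∃ σ ∈ Smax, ∀ i ∈ σ, e i = 0) → μ (P e) = 0 := by
    intro n
    induction n using Nat.strong_induction_on with
    | _ n ih =>
      intro e hsum hne hσ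
      have hkey := key e
      rw [if_pos hσ] at hkey
      have h0T : (0 : Fin s → ℕ) ∈ T e := (memT e 0).mpr fun i => Nat.zero_le _
      have heT : e ∈ T e := (memT e e).mpr fun i => le_refl _
      have hsub : ({0, e} : Finset (Fin s → ℕ)) ⊆ T e := by
        intro x hx
        rcases Finset.mem_insert.mp hx with h | h
        · subst h; exact h0T
        · rw [Finset.mem_singleton.mp h]; exact heT
      have hvanish : ∀ c ∈ T e, c ∉ ({0, e} : Finset (Fin s → ℕ)) → μ (P c) = 0 := by
        intro c hcT hc
        simp only [Finset.mem_insert, Finset.mem_singleton, not_or] at hc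
        obtain ⟨hc0, hce⟩ := hc
        have hle : ∀ i, c i ≤ e i := (memT e c).mp hcT
        have hσ' : ∃ σ ∈ Smax, ∀ i ∈ σ, c i = 0 := by
          obtain ⟨σ, h1, h2⟩ := hσ
          exact ⟨σ, h1, fun i hi => Nat.le_zero.mp ((h2 i hi) ▸ hle i)⟩
        have hlt : ∑ i, c i < n := by
          rw [← hsum]
          apply Finset.sum_lt_sum (fun i _ => hle i)
          obtain ⟨i, hi⟩ := Function.ne_iff.mp hce
          exact ⟨i, Finset.mem_univ i, lt_of_le_of_ne (hle i) hi⟩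
        exact ih _ hlt c rfl hc0 hσ'
      have hne0e : (0 : Fin s → ℕ) ≠ e := fun h => hne h.symm
      rw [← Finset.sum_subset hsub hvanish, Finset.sum_pair hne0e, m0] at hkey
      linarith
  -- assembly
  set A : Set ℕ := {N : ℕ | ∃ J : Finset (Fin s),
      (∀ σ ∈ Smax, (J ∩ σ).Nonempty) ∧ J.card = N} with hAdef
  set B : Set ℕ := {N : ℕ | ∃ e : Fin s → ℕ, e ≠ 0 ∧
      μ (fun i => p ^ e i) ≠ 0 ∧ N = ∑ i, e i} with hBdef
  have hAne : A.Nonempty :=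
    ⟨(Finset.univ : Finset (Fin s)).card, Finset.univ,
      fun σ hσ => by simpa using hSne σ hσ, rfl⟩
  obtain ⟨J, hJ, hJcard⟩ := Nat.sInf_mem hAne
  set χ : Fin s → ℕ := fun i => if i ∈ J then 1 else 0 with hχdef
  have hJne : J.Nonempty := by
    obtain ⟨σ, hσ⟩ := hS
    obtain ⟨i, hi⟩ := hJ σ hσ
    exact ⟨i, (Finset.mem_inter.mp hi).1⟩
  have hχne : χ ≠ 0 := by
    obtain ⟨i, hi⟩ := hJne
    intro h
    have := congrFun h i
    simp [hχdef, hi] at this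
  have hχsum : ∑ i, χ i = J.card := by
    simp [hχdef, Finset.sum_ite_mem, Finset.univ_inter]
  -- (C): μ(P χ) = -1
  have hmJ : μ (P χ) = -1 := by
    have hkey := key χ
    have hcond : ¬ ∃ σ ∈ Smax, ∀ i ∈ σ, χ i = 0 := by
      rintro ⟨σ, hσ, h0⟩
      obtain ⟨i, hi⟩ := hJ σ hσ
      obtain ⟨hiJ, hiσ⟩ := Finset.mem_inter.mp hi
      have := h0 i hiσ
      simp [hχdef, hiJ] at this
    rw [if_neg hcond] at hkey
    have h0T : (0 : Fin s → ℕ) ∈ T χ := (memT χ 0).mpr fun i => Nat.zero_le _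
    have hχT : χ ∈ T χ := (memT χ χ).mpr fun i => le_refl _
    have hsub : ({0, χ} : Finset (Fin s → ℕ)) ⊆ T χ := by
      intro x hx
      rcases Finset.mem_insert.mp hx with h | h
      · subst h; exact h0T
      · rw [Finset.mem_singleton.mp h]; exact hχT
    have hvanish : ∀ c ∈ T χ, c ∉ ({0, χ} : Finset (Fin s → ℕ)) → μ (P c) = 0 := by
      intro c hcT hc
      simp only [Finset.mem_insert, Finset.mem_singleton, not_or] at hc
      obtain ⟨hc0, hcχ⟩ := hc
      have hle : ∀ i, c i ≤ χ i := (memT χ c).mp hcT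
      obtain ⟨i, hi⟩ := Function.ne_iff.mp hcχ
      have hi2 : c i < χ i := lt_of_le_of_ne (hle i) hi
      have hiJ : i ∈ J := by
        by_contra h
        simp [hχdef, h] at hi2
      have hci : c i = 0 := by
        have : χ i = 1 := by simp [hχdef, hiJ]
        omega
      -- J.erase i cannot hit all σ
      have herase : ¬ ∀ σ ∈ Smax, ((J.erase i) ∩ σ).Nonempty := by
        intro hcontra
        have hmem : (J.erase i).card ∈ A := ⟨J.erase i, hcontra, rfl⟩
        have h1 := Nat.sInf_le hmem
        have h2 : (J.erase i).card < J.card := Finset.card_erase_lt_of_mem hiJ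
        omega
      push_neg at herase
      obtain ⟨σ, hσ, hσ0⟩ := herase
      refine hzero _ c rfl hc0 ⟨σ, hσ, fun j hjσ => ?_⟩
      by_contra hcj
      have hχj : χ j ≠ 0 := fun h => hcj (Nat.le_zero.mp (h ▸ hle j))
      have hjJ : j ∈ J := by
        by_contra h
        simp [hχdef, h] at hχj
      have hji : j ≠ i := fun h => hcj (h ▸ hci)
      exact (Finset.not_nonempty_iff_eq_empty.mpr hσ0) ⟨j, Finset.mem_inter.mpr ⟨Finset.mem_erase.mpr ⟨hji, hjJ⟩, hjσ⟩⟩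
    have hne0χ : (0 : Fin s → ℕ) ≠ χ := fun h => hχne h.symm
    rw [← Finset.sum_subset hsub hvanish, Finset.sum_pair hne0χ, m0] at hkey
    linarith
  have hfB : sInf A ∈ B := by
    refine ⟨χ, hχne, ?_, ?_⟩
    · show μ (P χ) ≠ 0
      rw [hmJ]; norm_num
    · rw [hχsum, hJcard]
  have hBne : B.Nonempty := ⟨sInf A, hfB⟩
  refine le_antisymm ?_ (Nat.sInf_le hfB)
  obtain ⟨e, hene, heμ, heN⟩ := Nat.sInf_mem hBne
  set J' : Finset (Fin s) := Finset.univ.filter (fun i => e i ≠ 0) with hJ'def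
  have hJ'hit : ∀ σ ∈ Smax, (J' ∩ σ).Nonempty := by
    intro σ hσ
    by_contra h
    have h0 : ∀ i ∈ σ, e i = 0 := by
      intro i hiσ
      by_contra hei
      exact h ⟨i, Finset.mem_inter.mpr ⟨Finset.mem_filter.mpr ⟨Finset.mem_univ i, hei⟩, hiσ⟩⟩
    exact heμ (hzero _ e rfl hene ⟨σ, hσ, h0⟩)
  have h1 : sInf A ≤ J'.card := Nat.sInf_le ⟨J', hJ'hit, rfl⟩
  have h2 : J'.card ≤ ∑ i, e i := by
    calc J'.card = ∑ _i ∈ J', 1 := (Finset.card_eq_sum_ones J')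
      _ ≤ ∑ i ∈ J', e i := Finset.sum_le_sum (fun i hi =>
          Nat.one_le_iff_ne_zero.mpr (Finset.mem_filter.mp hi).2)
      _ ≤ ∑ i, e i := Finset.sum_le_sum_of_subset (Finset.subset_univ J')
  omega
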